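/- A function F : (ℕ → ℕ) → ℕ has the property that every preimage F⁻¹{n} is Fσ (a countable union of closed sets in Baire space) if and only if there exists a function f on finite strings such that for every x, f(x↾n) = F(x) for all sufficiently large n. -/

import Mathlib

private lemma ofFn_eq_of_mem_cyl {x y : ℕ → ℕ} {n : ℕ} (h : y ∈ PiNat.cylinder x n) :
    (List.ofFn fun i : Fin n => y i) = List.ofFn fun i : Fin n => x i := by
  congr 1; funext i; exact h i i.isLt

private lemma exists_cyl_disjoint {C : Set (ℕ → ℕ)} (hC : IsClosed C) {x : ℕ → ℕ}
    (hx : x ∉ C) : ∃ N, ∀ n, N ≤ n → Disjoint (PiNat.cylinder x n) C := by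
  obtain ⟨v, ⟨y, N, rfl⟩, hxv, hv⟩ :=
    (PiNat.isTopologicalBasis_cylinders _).exists_subset_of_mem_open hx hC.isOpen_compl
  rw [← PiNat.mem_cylinder_iff_eq.1 hxv] at hv
  exact ⟨N, fun n hn => Set.disjoint_left.2 fun z hz => hv (PiNat.cylinder_anti x hn hz)⟩

theorem stmt_7 (F : (ℕ → ℕ) → ℕ) :
    (∀ n : ℕ, ∃ Cs : ℕ → Set (ℕ → ℕ), (∀ i, IsClosed (Cs i)) ∧ F ⁻¹' {n} = ⋃ i, Cs i) ↔
      ∃ f : List ℕ → ℕ, ∀ x : ℕ → ℕ, ∃ N : ℕ, ∀ n, N ≤ n →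
        f (List.ofFn fun i : Fin n => x i) = F x := by
  classical
  constructor
  · intro h
    choose Cs hCl hCU using h
    set D : ℕ → Set (ℕ → ℕ) := fun k => Cs (Nat.unpair k).1 (Nat.unpair k).2 with hD
    have hDcl : ∀ k, IsClosed (D k) := fun k => hCl _ _
    have hmem : ∀ x : ℕ → ℕ, ∃ k, x ∈ D k := by
      intro x
      have hx : x ∈ F ⁻¹' {F x} := rfl
      rw [hCU] at hx
      obtain ⟨i, hi⟩ := Set.mem_iUnion.1 hx
      exact ⟨Nat.pair (F x) i, by simpa [hD] using hi⟩
    have hsub : ∀ k x, x ∈ D k → F x = (Nat.unpair k).1 := by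
      intro k x hx
      have : x ∈ F ⁻¹' {(Nat.unpair k).1} := by
        rw [hCU]; exact Set.mem_iUnion.2 ⟨_, hx⟩
      simpa using this
    have hex : ∀ s : List ℕ, ∃ k,
        (PiNat.cylinder (fun i => s.getD i 0) s.length ∩ D k).Nonempty := by
      intro s
      obtain ⟨k, hk⟩ := hmem (fun i => s.getD i 0)
      exact ⟨k, _, PiNat.self_mem_cylinder _ _, hk⟩
    refine ⟨fun s => (Nat.unpair (Nat.find (hex s))).1, fun x => ?_⟩
    set k₀ := Nat.find (hmem x) with hk₀
    have hNk : ∀ k, k < k₀ → ∃ N, ∀ n, N ≤ n → Disjoint (PiNat.cylinder x n) (D k) :=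
      fun k hk => exists_cyl_disjoint (hDcl k) (Nat.find_min (hmem x) hk)
    choose Nf hNf using hNk
    refine ⟨(Finset.range k₀).sup (fun k => if h : k < k₀ then Nf k h else 0),
      fun n hn => ?_⟩
    set s := List.ofFn fun i : Fin n => x i with hs
    have hslen : s.length = n := List.length_ofFn
    have hsget : (fun i => s.getD i 0) ∈ PiNat.cylinder x n := by
      intro i hi
      show s.getD i 0 = x i
      have : s.getD i 0 = s[i]'(by omega) := List.getD_eq_getElem s 0 (by omega)
      rw [this]
      simp [hs]
    have hcyl : PiNat.cylinder (fun i => s.getD i 0) s.length = PiNat.cylinder x n := by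
      rw [hslen]; exact PiNat.mem_cylinder_iff_eq.1 hsget
    have h1 : (PiNat.cylinder (fun i => s.getD i 0) s.length ∩ D k₀).Nonempty := by
      rw [hcyl]; exact ⟨x, PiNat.self_mem_cylinder _ _, Nat.find_spec (hmem x)⟩
    have h2 : ∀ k, k < k₀ →
        ¬ (PiNat.cylinder (fun i => s.getD i 0) s.length ∩ D k).Nonempty := by
      intro k hk hne
      rw [hcyl] at hne
      have hle : Nf k hk ≤ (Finset.range k₀).sup (fun k => if h : k < k₀ then Nf k h else 0) := by
        have := Finset.le_sup (f := fun k => if h : k < k₀ then Nf k h else 0)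
          (Finset.mem_range.2 hk)
        simpa [hk] using this
      have hdisj := hNf k hk n (le_trans hle hn)
      rw [Set.disjoint_iff_inter_eq_empty] at hdisj
      exact hne.ne_empty hdisj
    have heq : Nat.find (hex s) = k₀ :=
      le_antisymm (Nat.find_min' _ h1)
        (by by_contra hlt; push_neg at hlt; exact h2 _ hlt (Nat.find_spec (hex s)))
    show (Nat.unpair (Nat.find (hex s))).1 = F x
    rw [heq]
    exact (hsub k₀ x (Nat.find_spec (hmem x))).symm
  · rintro ⟨f, hf⟩ n₀
    refine ⟨fun N => {x | ∀ n, N ≤ n → f (List.ofFn fun i : Fin n => x i) = n₀}, ?_, ?_⟩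
    · intro N
      have hrw : {x : ℕ → ℕ | ∀ n, N ≤ n → f (List.ofFn fun i : Fin n => x i) = n₀} =
          ⋂ n, ⋂ _ : N ≤ n, {x | f (List.ofFn fun i : Fin n => x i) = n₀} := by
        ext x; simp
      dsimp only
      rw [hrw]
      refine isClosed_iInter fun n => isClosed_iInter fun _ => ?_
      rw [← isOpen_compl_iff]
      rw [(PiNat.isTopologicalBasis_cylinders _).isOpen_iff]
      intro x hx
      refine ⟨PiNat.cylinder x n, ⟨x, n, rfl⟩, PiNat.self_mem_cylinder _ _, fun y hy => ?_⟩
      have := ofFn_eq_of_mem_cyl hy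
      simpa [Set.mem_compl_iff, this] using hx
    · ext x
      simp only [Set.mem_preimage, Set.mem_singleton_iff, Set.mem_iUnion, Set.mem_setOf_eq]
      constructor
      · intro hFx
        obtain ⟨N, hN⟩ := hf x
        exact ⟨N, fun n hn => by rw [hN n hn, hFx]⟩
      · rintro ⟨N, hN⟩
        obtain ⟨M, hM⟩ := hf x
        have h1 := hN (max N M) (le_max_left _ _)
        rw [hM (max N M) (le_max_right _ _)] at h1
        exact h1
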